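/- Let $1 \leq p \leq 2$ and for each $k \in \mathbb{N}$ let $T_k : L^2(\mathbb{R}^n) \to L^2(\mathbb{R}^n)$ be bounded linear operators such that $(\sum_k \|T_k f\|_{L^2}^2)^{1/2} \leq M_2 \|f\|_{L^2}$ for all $f \in L^2$. Then for every $u \in U^p$, applying $T_k$ pointwise in time, $(\sum_k \|T_k u\|_{U^p}^2)^{1/2} \leq M_2 \|u\|_{U^p}$. -/

import Mathlib

open MeasureTheory ENNReal Filter

noncomputable section

/-- The space `L²(ℝⁿ; ℂ)`. -/
abbrev Hsp (n : ℕ) : Type :=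
  MeasureTheory.Lp ℂ 2 (volume : Measure (EuclideanSpace ℝ (Fin n)))

namespace DP

variable {n : ℕ}

lemma rpow_iSup {ι : Sort*} (f : ι → ℝ≥0∞) {r : ℝ} (hr : 0 < r) :
    (⨆ i, f i) ^ r = ⨆ i, (f i) ^ r :=
  (ENNReal.orderIsoRpow r hr).map_iSup f

lemma tsum_iSup_mono {J : Type*} [Nonempty J] [Preorder J] [IsDirected J (· ≤ ·)]
    (g : J → ℕ → ℝ≥0∞) (hg : ∀ k, Monotone fun s => g s k) :
    ∑' k, ⨆ s, g s k = ⨆ s, ∑' k, g s k :=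
  calc ∑' k, ⨆ s, g s k = ⨆ t : Finset ℕ, ∑ k ∈ t, ⨆ s, g s k := ENNReal.tsum_eq_iSup_sum
    _ = ⨆ t : Finset ℕ, ⨆ s, ∑ k ∈ t, g s k := by
        congr 1; ext t; exact ENNReal.finsetSum_iSup_of_monotone (fun k => hg k)
    _ = ⨆ s, ⨆ t : Finset ℕ, ∑ k ∈ t, g s k := iSup_comm
    _ = ⨆ s, ∑' k, g s k := by
        congr 1; ext s; exact ENNReal.tsum_eq_iSup_sum.symm

lemma minkowski_two (f g : ℕ → ℝ≥0∞) {r : ℝ} (hr : 1 ≤ r) :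
    (∑' k, (f k + g k) ^ r) ^ (1/r) ≤ (∑' k, f k ^ r) ^ (1/r) + (∑' k, g k ^ r) ^ (1/r) := by
  have hr0 : 0 < r := lt_of_lt_of_le zero_lt_one hr
  have h1r : (0:ℝ) < 1/r := by positivity
  rw [ENNReal.tsum_eq_iSup_sum, rpow_iSup _ h1r]
  refine iSup_le fun t => le_trans (ENNReal.Lp_add_le t f g hr) (add_le_add ?_ ?_) <;>
    exact ENNReal.rpow_le_rpow (ENNReal.sum_le_tsum t) h1r.le

lemma minkowski_finset {J : Type*} (s : Finset J) (z : J → ℕ → ℝ≥0∞) {r : ℝ} (hr : 1 ≤ r) :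
    (∑' k, (∑ j ∈ s, z j k) ^ r) ^ (1/r) ≤ ∑ j ∈ s, (∑' k, z j k ^ r) ^ (1/r) := by
  classical
  have hr0 : 0 < r := lt_of_lt_of_le zero_lt_one hr
  have h1r : (0:ℝ) < 1/r := by positivity
  induction s using Finset.induction_on with
  | empty => simp [ENNReal.zero_rpow_of_pos hr0, ENNReal.zero_rpow_of_pos h1r, hr0]
  | insert a s ha ih =>
      simp only [Finset.sum_insert ha]
      exact le_trans (minkowski_two _ _ hr) (add_le_add le_rfl ih)

lemma minkowski_tsum (z : ℕ → ℕ → ℝ≥0∞) {r : ℝ} (hr : 1 ≤ r) :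
    (∑' k, (∑' j, z j k) ^ r) ^ (1/r) ≤ ∑' j, (∑' k, z j k ^ r) ^ (1/r) := by
  have hr0 : 0 < r := lt_of_lt_of_le zero_lt_one hr
  have h1r : (0:ℝ) < 1/r := by positivity
  have hmono : ∀ k, Monotone fun s : Finset ℕ => (∑ j ∈ s, z j k) ^ r := fun k s1 s2 h =>
    ENNReal.rpow_le_rpow (Finset.sum_le_sum_of_subset h) hr0.le
  calc (∑' k, (∑' j, z j k) ^ r) ^ (1/r)
      = (∑' k, ⨆ s : Finset ℕ, (∑ j ∈ s, z j k) ^ r) ^ (1/r) := by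
        congr 1; congr 1; ext k; rw [ENNReal.tsum_eq_iSup_sum, rpow_iSup _ hr0]
    _ = (⨆ s : Finset ℕ, ∑' k, (∑ j ∈ s, z j k) ^ r) ^ (1/r) := by
        rw [tsum_iSup_mono _ hmono]
    _ = ⨆ s : Finset ℕ, (∑' k, (∑ j ∈ s, z j k) ^ r) ^ (1/r) := rpow_iSup _ h1r
    _ ≤ ∑' j, (∑' k, z j k ^ r) ^ (1/r) := by
        refine iSup_le fun s => le_trans (minkowski_finset s z hr) ?_
        exact ENNReal.sum_le_tsum s


/-- The homogeneous `p`-variation seminorm of `v : ℝ → L²(ℝⁿ)`, as a supremum over all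
finite increasing sequences (partitions). -/
def pVar (p : ℝ) (v : ℝ → Hsp n) : ℝ≥0∞ :=
  ⨆ (N : ℕ) (t : Fin (N + 1) → ℝ) (_ : StrictMono t),
    (∑ j : Fin N, (‖v (t j.succ) - v (t j.castSucc)‖₊ : ℝ≥0∞) ^ p) ^ (1 / p)

/-- The `L^∞_t L^2_x` norm of `v : ℝ → L²(ℝⁿ)`. -/
def supNorm (v : ℝ → Hsp n) : ℝ≥0∞ := ⨆ t : ℝ, (‖v t‖₊ : ℝ≥0∞)

/-- The `V^p` norm `‖v‖_{V^p} = ‖v‖_{L^∞_t L^2_x} + |v|_{V^p}`. -/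
def VpNorm (p : ℝ) (v : ℝ → Hsp n) : ℝ≥0∞ := supNorm v + pVar p v

/-- The step function with partition points `t 0 < t 1 < ... < t N`, taking the value
`f j` on `[t j, t (j+1))` and `f N` on `[t N, ∞)` (and `0` on `(-∞, t 0)`). -/
def stepFun (N : ℕ) (t : Fin (N + 1) → ℝ) (f : Fin (N + 1) → Hsp n) : ℝ → Hsp n := fun s =>
  (∑ j : Fin N,
      Set.indicator (Set.Ico (t j.castSucc) (t j.succ)) (fun _ => f j.castSucc) s)
    + Set.indicator (Set.Ici (t (Fin.last N))) (fun _ => f (Fin.last N)) s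

/-- A `U^p` atom: a step function whose values are `ℓ^p`-normalised in `L²`. -/
def IsUpAtom (p : ℝ) (u : ℝ → Hsp n) : Prop :=
  ∃ (N : ℕ) (t : Fin (N + 1) → ℝ) (f : Fin (N + 1) → Hsp n),
    StrictMono t ∧ u = stepFun N t f ∧ (∑ j, ‖f j‖ ^ p) ^ (1 / p) = 1

/-- The atomic `U^p` norm: the infimum of `∑ |c j|` over all representations
`u = ∑ c j • (a j)` as an absolutely convergent sum of `U^p` atoms. -/
def UpNorm (p : ℝ) (u : ℝ → Hsp n) : ℝ≥0∞ :=
  ⨅ (c : ℕ → ℝ) (a : ℕ → ℝ → Hsp n) (_ : ∀ j, IsUpAtom p (a j))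
    (_ : Summable fun j => |c j|)
    (_ : ∀ s : ℝ, HasSum (fun j => c j • a j s) (u s)),
    ENNReal.ofReal (∑' j, |c j|)

section Lemmas

variable {p : ℝ}

lemma map_indicator (L : Hsp n →ₗ[ℝ] Hsp n) (A : Set ℝ) (c : Hsp n) (s : ℝ) :
    A.indicator (fun _ => L c) s = L (A.indicator (fun _ => c) s) := by
  by_cases h : s ∈ A <;> simp [h]

lemma stepFun_map (L : Hsp n →ₗ[ℝ] Hsp n) (N : ℕ) (t : Fin (N + 1) → ℝ)
    (f : Fin (N + 1) → Hsp n) (s : ℝ) :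
    stepFun N t (fun j => L (f j)) s = L (stepFun N t f s) := by
  simp only [stepFun, map_add, map_sum]
  congr 1
  · exact Finset.sum_congr rfl fun j _ => map_indicator L _ _ s
  · exact map_indicator L _ _ s

lemma exists_unit : ∃ g : Hsp n, ‖g‖ = 1 := by
  set s := Metric.ball (0 : EuclideanSpace ℝ (Fin n)) 1 with hs_def
  have hs : MeasurableSet s := measurableSet_ball
  have h0 : volume s ≠ 0 := (Metric.measure_ball_pos volume 0 one_pos).ne'
  have hfin : volume s ≠ ⊤ := measure_ball_lt_top.ne
  set h : Hsp n := indicatorConstLp 2 hs hfin (1 : ℂ) with hh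
  have hnorm : ‖h‖ = (volume s).toReal ^ ((2:ℝ)⁻¹) := by
    rw [hh, norm_indicatorConstLp (by norm_num) (by norm_num)]
    simp [ENNReal.toReal_ofNat, one_div, measureReal_def]
  have hpos : 0 < ‖h‖ := by
    rw [hnorm]
    exact Real.rpow_pos_of_pos (ENNReal.toReal_pos h0 hfin) _
  refine ⟨(‖h‖⁻¹ : ℝ) • h, ?_⟩
  rw [norm_smul, Real.norm_eq_abs, abs_of_nonneg (inv_nonneg.2 hpos.le),
    inv_mul_cancel₀ hpos.ne']

lemma exists_atom (hp1 : 1 ≤ p) : ∃ a : ℝ → Hsp n, IsUpAtom p a := by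
  obtain ⟨g, hg⟩ := exists_unit (n := n)
  refine ⟨stepFun 0 (fun _ => 0) (fun _ => g), 0, _, _,
    fun i j hij => absurd (Subsingleton.elim (α := Fin 1) i j) (ne_of_lt hij), rfl, ?_⟩
  simp [hg, Real.one_rpow]

/-- The set of values of representations of `u`. -/
def Reps (p : ℝ) (u : ℝ → Hsp n) : Set ℝ≥0∞ :=
  {r | ∃ c : ℕ → ℝ, ∃ a : ℕ → ℝ → Hsp n, (∀ j, IsUpAtom p (a j)) ∧
    (Summable fun j => |c j|) ∧ (∀ s : ℝ, HasSum (fun j => c j • a j s) (u s)) ∧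
    r = ENNReal.ofReal (∑' j, |c j|)}

lemma upNorm_eq_sInf (u : ℝ → Hsp n) : UpNorm p u = sInf (Reps p u) := by
  apply le_antisymm
  · refine le_sInf ?_
    rintro r ⟨c, a, h1, h2, h3, rfl⟩
    exact iInf_le_of_le c (iInf_le_of_le a (iInf_le_of_le h1 (iInf_le_of_le h2 (iInf_le _ h3))))
  · exact le_iInf fun c => le_iInf fun a => le_iInf fun h1 => le_iInf fun h2 =>
      le_iInf fun h3 => sInf_le ⟨c, a, h1, h2, h3, rfl⟩

lemma upNorm_le_of_mem {u : ℝ → Hsp n} {r : ℝ≥0∞} (hr : r ∈ Reps p u) : UpNorm p u ≤ r :=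
  (upNorm_eq_sInf u).le.trans (sInf_le hr)

/-- Any step function is a multiple of an atom. -/
lemma stepFun_eq_smul_atom (hp1 : 1 ≤ p) (N : ℕ) (t : Fin (N + 1) → ℝ) (ht : StrictMono t)
    (v : Fin (N + 1) → Hsp n) :
    ∃ A : ℝ → Hsp n, IsUpAtom p A ∧
      ∀ s, stepFun N t v s = ((∑ j, ‖v j‖ ^ p) ^ (1 / p)) • A s := by
  have hp0 : p ≠ 0 := by positivity
  set b : ℝ := (∑ j, ‖v j‖ ^ p) ^ (1 / p) with hb_def
  have hS : (0:ℝ) ≤ ∑ j, ‖v j‖ ^ p :=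
    Finset.sum_nonneg fun j _ => Real.rpow_nonneg (norm_nonneg _) _
  have hb0 : 0 ≤ b := Real.rpow_nonneg hS _
  by_cases hb : b = 0
  · have hSz : ∑ j, ‖v j‖ ^ p = 0 := by
      rwa [hb_def, Real.rpow_eq_zero hS (by positivity)] at hb
    have hv : ∀ j, v j = 0 := by
      intro j
      have h1 : ‖v j‖ ^ p = 0 := by
        have := (Finset.sum_eq_zero_iff_of_nonneg
          (fun j _ => Real.rpow_nonneg (norm_nonneg _) _)).1 hSz j (Finset.mem_univ j)
        exact this
      have : ‖v j‖ = 0 := by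
        rwa [Real.rpow_eq_zero (norm_nonneg _) hp0] at h1
      exact norm_eq_zero.1 this
    obtain ⟨A, hA⟩ := exists_atom (n := n) hp1
    refine ⟨A, hA, fun s => ?_⟩
    rw [hb, zero_smul]
    simp [stepFun, hv]
  · have hbpos : 0 < b := lt_of_le_of_ne hb0 (Ne.symm hb)
    refine ⟨stepFun N t (fun j => b⁻¹ • v j), ⟨N, t, _, ht, rfl, ?_⟩, fun s => ?_⟩
    · have hterm : ∀ j : Fin (N+1), ‖b⁻¹ • v j‖ ^ p = (b⁻¹) ^ p * ‖v j‖ ^ p := by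
        intro j
        rw [norm_smul, Real.norm_eq_abs, abs_of_nonneg (inv_nonneg.2 hb0),
          Real.mul_rpow (inv_nonneg.2 hb0) (norm_nonneg _)]
      simp only [hterm, ← Finset.mul_sum]
      rw [Real.mul_rpow (Real.rpow_nonneg (inv_nonneg.2 hb0) _) hS,
        ← Real.rpow_mul (inv_nonneg.2 hb0), mul_one_div_cancel hp0, Real.rpow_one,
        ← hb_def, inv_mul_cancel₀ hb]
    · rw [show ((fun j => b⁻¹ • v j)) = fun j => (LinearMap.lsmul ℝ (Hsp n) b⁻¹) (v j) from rfl,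
        stepFun_map]
      simp only [LinearMap.lsmul_apply, smul_smul, mul_inv_cancel₀ hb, one_smul]

lemma sum_enorm_rpow (hp0 : 0 < p) {m : ℕ} (w : Fin m → Hsp n) :
    ∑ j, (‖w j‖₊ : ℝ≥0∞) ^ p = ENNReal.ofReal (∑ j, ‖w j‖ ^ p) := by
  rw [ENNReal.ofReal_sum_of_nonneg (fun j _ => Real.rpow_nonneg (norm_nonneg _) _)]
  refine Finset.sum_congr rfl fun j _ => ?_
  rw [← ENNReal.ofReal_rpow_of_nonneg (norm_nonneg _) hp0.le, ← coe_nnnorm (w j),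
    ENNReal.ofReal_coe_nnreal]

lemma ofReal_lpNorm (hp0 : 0 < p) {m : ℕ} (w : Fin m → Hsp n) :
    ENNReal.ofReal ((∑ j, ‖w j‖ ^ p) ^ (1 / p)) = (∑ j, (‖w j‖₊ : ℝ≥0∞) ^ p) ^ (1 / p) := by
  rw [sum_enorm_rpow hp0,
    ENNReal.ofReal_rpow_of_nonneg (Finset.sum_nonneg fun j _ => Real.rpow_nonneg (norm_nonneg _) _)
      (by positivity)]

lemma atom_orth (hp1 : 1 ≤ p) (hp2 : p ≤ 2) (T : ℕ → Hsp n →L[ℂ] Hsp n) (M2 : ℝ≥0∞)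
    (hT : ∀ f : Hsp n, (∑' k, (‖T k f‖₊ : ℝ≥0∞) ^ (2 : ℝ)) ^ ((1 : ℝ) / 2) ≤ M2 * (‖f‖₊ : ℝ≥0∞))
    {N : ℕ} (f : Fin (N + 1) → Hsp n) (hf : (∑ j, ‖f j‖ ^ p) ^ (1 / p) = 1) :
    (∑' k, ((∑ j, (‖T k (f j)‖₊ : ℝ≥0∞) ^ p) ^ (1 / p)) ^ (2 : ℝ)) ^ ((1 : ℝ) / 2) ≤ M2 := by
  have hp0 : 0 < p := lt_of_lt_of_le zero_lt_one hp1
  have hfS : ∑ j, ‖f j‖ ^ p = 1 := by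
    have hS : (0:ℝ) ≤ ∑ j, ‖f j‖ ^ p :=
      Finset.sum_nonneg fun j _ => Real.rpow_nonneg (norm_nonneg _) _
    have := congrArg (· ^ p) hf
    simpa [← Real.rpow_mul hS, one_div, inv_mul_cancel₀ hp0.ne'] using this
  have hfE : ∑ j, (‖f j‖₊ : ℝ≥0∞) ^ p = 1 := by
    rw [sum_enorm_rpow hp0, hfS, ENNReal.ofReal_one]
  have hTj : ∀ g : Hsp n, ∑' k, (‖T k g‖₊ : ℝ≥0∞) ^ (2:ℝ) ≤ (M2 * (‖g‖₊ : ℝ≥0∞)) ^ (2:ℝ) := by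
    intro g
    have := ENNReal.rpow_le_rpow (hT g) (by norm_num : (0:ℝ) ≤ 2)
    rwa [← ENNReal.rpow_mul, show (1:ℝ)/2*2 = 1 by norm_num, ENNReal.rpow_one] at this
  set r : ℝ := 2 / p with hr_def
  have hr1 : 1 ≤ r := (one_le_div hp0).mpr hp2
  have hr0 : 0 < r := lt_of_lt_of_le zero_lt_one hr1
  set E : ℕ → Fin (N+1) → ℝ≥0∞ := fun k j => (‖T k (f j)‖₊ : ℝ≥0∞) with hE_def
  have key : ∑' k, ((∑ j, E k j ^ p) ^ (1/p)) ^ (2:ℝ) ≤ M2 ^ (2:ℝ) := by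
    have hterm : ∀ k, ((∑ j, E k j ^ p) ^ (1/p)) ^ (2:ℝ) = (∑ j, E k j ^ p) ^ r := by
      intro k
      rw [← ENNReal.rpow_mul]
      congr 1
      rw [hr_def]; ring
    simp only [hterm]
    calc ∑' k, (∑ j, E k j ^ p) ^ r
        = ((∑' k, (∑ j, E k j ^ p) ^ r) ^ (1/r)) ^ r := by
          rw [← ENNReal.rpow_mul, one_div_mul_cancel hr0.ne', ENNReal.rpow_one]
      _ ≤ (∑ j, (∑' k, (E k j ^ p) ^ r) ^ (1/r)) ^ r :=
          ENNReal.rpow_le_rpow (minkowski_finset Finset.univ (fun j k => E k j ^ p) hr1) hr0.le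
      _ = (∑ j, (∑' k, E k j ^ (2:ℝ)) ^ (1/r)) ^ r := by
          have hpr : ∀ x : ℝ≥0∞, (x ^ p) ^ r = x ^ (2:ℝ) := fun x => by
            rw [← ENNReal.rpow_mul]
            congr 1
            rw [hr_def]
            field_simp
          simp only [hpr]
      _ ≤ (∑ j, ((M2 * (‖f j‖₊ : ℝ≥0∞)) ^ (2:ℝ)) ^ (1/r)) ^ r := by
          refine ENNReal.rpow_le_rpow (Finset.sum_le_sum fun j _ => ?_) hr0.le
          exact ENNReal.rpow_le_rpow (hTj (f j)) (by positivity)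
      _ = (∑ j, M2 ^ p * (‖f j‖₊ : ℝ≥0∞) ^ p) ^ r := by
          have hM : ∀ x : ℝ≥0∞, ((M2 * x) ^ (2:ℝ)) ^ (1/r) = M2 ^ p * x ^ p := fun x => by
            rw [← ENNReal.rpow_mul, show (2:ℝ) * (1/r) = p by rw [hr_def]; field_simp,
              ENNReal.mul_rpow_of_nonneg _ _ hp0.le]
          simp only [hM]
      _ = (M2 ^ p) ^ r := by rw [← Finset.mul_sum, hfE, mul_one]
      _ = M2 ^ (2:ℝ) := by
          rw [← ENNReal.rpow_mul]
          congr 1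
          rw [hr_def]
          field_simp
  calc (∑' k, ((∑ j, E k j ^ p) ^ (1/p)) ^ (2:ℝ)) ^ ((1:ℝ)/2)
      ≤ (M2 ^ (2:ℝ)) ^ ((1:ℝ)/2) := ENNReal.rpow_le_rpow key (by norm_num)
    _ = M2 := by rw [← ENNReal.rpow_mul, show (2:ℝ) * (1/2) = 1 by norm_num, ENNReal.rpow_one]

lemma norm_sum_one (hp0 : 0 < p) {N : ℕ} (f : Fin (N + 1) → Hsp n)
    (hf : (∑ j, ‖f j‖ ^ p) ^ (1 / p) = 1) : ∑ j, ‖f j‖ ^ p = 1 := by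
  have hS : (0:ℝ) ≤ ∑ j, ‖f j‖ ^ p :=
    Finset.sum_nonneg fun j _ => Real.rpow_nonneg (norm_nonneg _) _
  have := congrArg (· ^ p) hf
  simpa [← Real.rpow_mul hS, one_div, inv_mul_cancel₀ hp0.ne'] using this

lemma bk_le_opNorm (hp1 : 1 ≤ p) (Tk : Hsp n →L[ℂ] Hsp n) {N : ℕ} (f : Fin (N + 1) → Hsp n)
    (hf : (∑ j, ‖f j‖ ^ p) ^ (1 / p) = 1) :
    (∑ j, ‖Tk (f j)‖ ^ p) ^ (1 / p) ≤ ‖Tk‖ := by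
  have hp0 : 0 < p := lt_of_lt_of_le zero_lt_one hp1
  have hsum : ∑ j, ‖Tk (f j)‖ ^ p ≤ ‖Tk‖ ^ p := by
    calc ∑ j, ‖Tk (f j)‖ ^ p ≤ ∑ j, (‖Tk‖ * ‖f j‖) ^ p :=
          Finset.sum_le_sum fun j _ =>
            Real.rpow_le_rpow (norm_nonneg _) (Tk.le_opNorm (f j)) hp0.le
      _ = ‖Tk‖ ^ p * ∑ j, ‖f j‖ ^ p := by
          simp only [Real.mul_rpow (norm_nonneg Tk) (norm_nonneg _), ← Finset.mul_sum]
      _ = ‖Tk‖ ^ p := by rw [norm_sum_one hp0 f hf, mul_one]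
  calc (∑ j, ‖Tk (f j)‖ ^ p) ^ (1/p) ≤ (‖Tk‖ ^ p) ^ (1/p) :=
        Real.rpow_le_rpow (Finset.sum_nonneg fun j _ => Real.rpow_nonneg (norm_nonneg _) _)
          hsum (by positivity)
    _ = ‖Tk‖ := by
        rw [← Real.rpow_mul (norm_nonneg Tk), mul_one_div_cancel hp0.ne', Real.rpow_one]

lemma rep_step (hp1 : 1 ≤ p) (Tk : Hsp n →L[ℂ] Hsp n) {u : ℝ → Hsp n}
    (c : ℕ → ℝ) (N : ℕ → ℕ) (t : ∀ j, Fin (N j + 1) → ℝ) (f : ∀ j, Fin (N j + 1) → Hsp n)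
    (hmono : ∀ j, StrictMono (t j))
    (hnorm : ∀ j, (∑ i, ‖f j i‖ ^ p) ^ (1 / p) = 1)
    (h2 : Summable fun j => |c j|)
    (h3 : ∀ s : ℝ, HasSum (fun j => c j • stepFun (N j) (t j) (f j) s) (u s)) :
    UpNorm p (fun s => Tk (u s)) ≤
      ENNReal.ofReal (∑' j, |c j| * ((∑ i, ‖Tk (f j i)‖ ^ p) ^ (1 / p))) := by
  set b : ℕ → ℝ := fun j => (∑ i, ‖Tk (f j i)‖ ^ p) ^ (1 / p) with hb_def
  have hb0 : ∀ j, 0 ≤ b j := fun j =>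
    Real.rpow_nonneg (Finset.sum_nonneg fun i _ => Real.rpow_nonneg (norm_nonneg _) _) _
  have hble : ∀ j, b j ≤ ‖Tk‖ := fun j => bk_le_opNorm hp1 Tk (f j) (hnorm j)
  have hstep : ∀ j, ∃ A : ℝ → Hsp n, IsUpAtom p A ∧
      ∀ s, stepFun (N j) (t j) (fun i => Tk (f j i)) s = b j • A s := fun j =>
    stepFun_eq_smul_atom hp1 (N j) (t j) (hmono j) (fun i => Tk (f j i))
  choose A hA hAs using hstep
  have hsummul : Summable fun j => |c j| * b j :=
    Summable.of_nonneg_of_le (fun j => mul_nonneg (abs_nonneg _) (hb0 j))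
      (fun j => mul_le_mul_of_nonneg_left (hble j) (abs_nonneg _)) (h2.mul_right ‖Tk‖)
  have hmem : ENNReal.ofReal (∑' j, |c j * b j|) ∈ Reps p (fun s => Tk (u s)) := by
    refine ⟨fun j => c j * b j, A, hA, ?_, ?_, rfl⟩
    · refine Summable.congr hsummul fun j => ?_
      rw [abs_mul, abs_of_nonneg (hb0 j)]
    · intro s
      have hTr := (Tk.restrictScalars ℝ).hasSum (h3 s)
      have heq : ∀ j, (c j * b j) • A j s =
          (Tk.restrictScalars ℝ) (c j • stepFun (N j) (t j) (f j) s) := by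
        intro j
        rw [_root_.map_smul, mul_smul]
        congr 1
        rw [← hAs j s]
        exact stepFun_map ((Tk.restrictScalars ℝ).toLinearMap) _ _ _ s
      rw [show (fun j => (c j * b j) • A j s) =
        fun j => (Tk.restrictScalars ℝ) (c j • stepFun (N j) (t j) (f j) s) from
        funext heq]
      exact hTr
  refine le_trans (upNorm_le_of_mem hmem) (le_of_eq ?_)
  congr 1
  exact tsum_congr fun j => by rw [abs_mul, abs_of_nonneg (hb0 j)]

lemma upNorm_zero (hp1 : 1 ≤ p) : UpNorm p (fun _ : ℝ => (0 : Hsp n)) = 0 := by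
  refine le_antisymm ?_ zero_le
  obtain ⟨A, hA⟩ := exists_atom (n := n) hp1
  have h := upNorm_le_of_mem (p := p) (u := fun _ : ℝ => (0 : Hsp n))
    ⟨fun _ => (0:ℝ), fun _ => A, fun _ => hA, by simpa using summable_zero,
      fun s => by simpa using hasSum_zero, rfl⟩
  simpa using h

lemma le_mul_sInf {x C : ℝ≥0∞} {S : Set ℝ≥0∞} (hC : C ≠ ⊤) (hS : S.Nonempty)
    (h : ∀ r ∈ S, x ≤ C * r) : x ≤ C * sInf S := by
  rcases eq_or_ne C 0 with rfl | hC0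
  · obtain ⟨r, hr⟩ := hS
    simpa using h r hr
  · have : Nonempty S := hS.to_subtype
    rw [sInf_eq_iInf', ENNReal.mul_iInf_of_ne hC0 hC]
    exact le_iInf fun r => h r r.2

lemma single_rep (hp1 : 1 ≤ p) (Tk : Hsp n →L[ℂ] Hsp n) {u : ℝ → Hsp n}
    (c : ℕ → ℝ) (a : ℕ → ℝ → Hsp n) (h1 : ∀ j, IsUpAtom p (a j))
    (h2 : Summable fun j => |c j|) (h3 : ∀ s : ℝ, HasSum (fun j => c j • a j s) (u s)) :
    UpNorm p (fun s => Tk (u s)) ≤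
      ENNReal.ofReal ‖Tk‖ * ENNReal.ofReal (∑' j, |c j|) := by
  choose N t f hmono hstep hnorm using h1
  simp only [hstep] at h3
  refine le_trans (rep_step hp1 Tk c N t f hmono hnorm h2 h3) ?_
  rw [← ENNReal.ofReal_mul (norm_nonneg Tk)]
  apply ENNReal.ofReal_le_ofReal
  have hb0 : ∀ j, (0:ℝ) ≤ (∑ i, ‖Tk (f j i)‖ ^ p) ^ (1 / p) := fun j =>
    Real.rpow_nonneg (Finset.sum_nonneg fun i _ => Real.rpow_nonneg (norm_nonneg _) _) _
  have hble : ∀ j, (∑ i, ‖Tk (f j i)‖ ^ p) ^ (1 / p) ≤ ‖Tk‖ := fun j =>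
    bk_le_opNorm hp1 Tk (f j) (hnorm j)
  have hsummul : Summable fun j => |c j| * (∑ i, ‖Tk (f j i)‖ ^ p) ^ (1 / p) :=
    Summable.of_nonneg_of_le (fun j => mul_nonneg (abs_nonneg _) (hb0 j))
      (fun j => mul_le_mul_of_nonneg_left (hble j) (abs_nonneg _)) (h2.mul_right ‖Tk‖)
  calc ∑' j, |c j| * (∑ i, ‖Tk (f j i)‖ ^ p) ^ (1 / p)
      ≤ ∑' j, |c j| * ‖Tk‖ := Summable.tsum_le_tsum
        (fun j => mul_le_mul_of_nonneg_left (hble j) (abs_nonneg _)) hsummul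
        (h2.mul_right ‖Tk‖)
    _ = ‖Tk‖ * ∑' j, |c j| := by rw [tsum_mul_right, mul_comm]

lemma main_rep (hp1 : 1 ≤ p) (hp2 : p ≤ 2) (T : ℕ → Hsp n →L[ℂ] Hsp n) (M2 : ℝ≥0∞)
    (hT : ∀ f : Hsp n, (∑' k, (‖T k f‖₊ : ℝ≥0∞) ^ (2 : ℝ)) ^ ((1 : ℝ) / 2) ≤ M2 * (‖f‖₊ : ℝ≥0∞))
    {u : ℝ → Hsp n}
    (c : ℕ → ℝ) (a : ℕ → ℝ → Hsp n) (h1 : ∀ j, IsUpAtom p (a j))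
    (h2 : Summable fun j => |c j|) (h3 : ∀ s : ℝ, HasSum (fun j => c j • a j s) (u s)) :
    (∑' k, UpNorm p (fun s => T k (u s)) ^ (2 : ℝ)) ^ ((1 : ℝ) / 2) ≤
      M2 * ENNReal.ofReal (∑' j, |c j|) := by
  have hp0 : 0 < p := lt_of_lt_of_le zero_lt_one hp1
  choose N t f hmono hstep hnorm using h1
  simp only [hstep] at h3
  set b : ℕ → ℕ → ℝ := fun j k => (∑ i, ‖T k (f j i)‖ ^ p) ^ (1 / p) with hb_def
  have hb0 : ∀ j k, (0:ℝ) ≤ b j k := fun j k =>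
    Real.rpow_nonneg (Finset.sum_nonneg fun i _ => Real.rpow_nonneg (norm_nonneg _) _) _
  have hble : ∀ j k, b j k ≤ ‖T k‖ := fun j k => bk_le_opNorm hp1 (T k) (f j) (hnorm j)
  have hsummul : ∀ k, Summable fun j => |c j| * b j k := fun k =>
    Summable.of_nonneg_of_le (fun j => mul_nonneg (abs_nonneg _) (hb0 j k))
      (fun j => mul_le_mul_of_nonneg_left (hble j k) (abs_nonneg _)) (h2.mul_right ‖T k‖)
  have hk : ∀ k, UpNorm p (fun s => T k (u s)) ≤
      ∑' j, ENNReal.ofReal |c j| * ENNReal.ofReal (b j k) := by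
    intro k
    refine le_trans (rep_step hp1 (T k) c N t f hmono hnorm h2 h3) (le_of_eq ?_)
    rw [ENNReal.ofReal_tsum_of_nonneg
      (fun j => mul_nonneg (abs_nonneg _) (hb0 j k)) (hsummul k)]
    exact tsum_congr fun j => ENNReal.ofReal_mul (abs_nonneg _)
  have horth : ∀ j, (∑' k, ENNReal.ofReal (b j k) ^ (2:ℝ)) ^ ((1:ℝ)/2) ≤ M2 := by
    intro j
    have hco : ∀ k, ENNReal.ofReal (b j k) =
        (∑ i, (‖T k (f j i)‖₊ : ℝ≥0∞) ^ p) ^ (1/p) := fun k => ofReal_lpNorm hp0 _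
    simp only [hco]
    exact atom_orth hp1 hp2 T M2 hT (f j) (hnorm j)
  calc (∑' k, UpNorm p (fun s => T k (u s)) ^ (2 : ℝ)) ^ ((1 : ℝ) / 2)
      ≤ (∑' k, (∑' j, ENNReal.ofReal |c j| * ENNReal.ofReal (b j k)) ^ (2:ℝ)) ^ ((1:ℝ)/2) := by
        refine ENNReal.rpow_le_rpow (ENNReal.tsum_le_tsum fun k => ?_) (by norm_num)
        exact ENNReal.rpow_le_rpow (hk k) (by norm_num)
    _ ≤ ∑' j, (∑' k, (ENNReal.ofReal |c j| * ENNReal.ofReal (b j k)) ^ (2:ℝ)) ^ ((1:ℝ)/2) :=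
        minkowski_tsum (fun j k => ENNReal.ofReal |c j| * ENNReal.ofReal (b j k))
          (by norm_num : (1:ℝ) ≤ 2)
    _ = ∑' j, ENNReal.ofReal |c j| * (∑' k, ENNReal.ofReal (b j k) ^ (2:ℝ)) ^ ((1:ℝ)/2) := by
        refine tsum_congr fun j => ?_
        rw [show (fun k => (ENNReal.ofReal |c j| * ENNReal.ofReal (b j k)) ^ (2:ℝ)) =
          fun k => ENNReal.ofReal |c j| ^ (2:ℝ) * ENNReal.ofReal (b j k) ^ (2:ℝ) from
          funext fun k => ENNReal.mul_rpow_of_nonneg _ _ (by norm_num), ENNReal.tsum_mul_left,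
          ENNReal.mul_rpow_of_nonneg _ _ (by norm_num : (0:ℝ) ≤ 1/2), ← ENNReal.rpow_mul,
          show (2:ℝ) * (1/2) = 1 by norm_num, ENNReal.rpow_one]
    _ ≤ ∑' j, ENNReal.ofReal |c j| * M2 :=
        ENNReal.tsum_le_tsum fun j => mul_le_mul_right (horth j) _
    _ = M2 * ENNReal.ofReal (∑' j, |c j|) := by
        rw [ENNReal.tsum_mul_right, ENNReal.ofReal_tsum_of_nonneg (fun j => abs_nonneg _) h2,
          mul_comm]

end Lemmas

end DP

/-- (Almost orthogonality in `U^p`.) Let `1 ≤ p ≤ 2` and let `T k` be bounded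
linear operators on `L²(ℝⁿ)` with `(∑ k ‖T k f‖²)^{1/2} ≤ M₂ ‖f‖` for all `f`. Then for every
`u ∈ U^p`, applying `T k` pointwise in time, `(∑ k ‖T k u‖_{U^p}²)^{1/2} ≤ M₂ ‖u‖_{U^p}`. -/
theorem stmt2 (n : ℕ) (p : ℝ) (hp1 : 1 ≤ p) (hp2 : p ≤ 2)
    (T : ℕ → Hsp n →L[ℂ] Hsp n) (M2 : ℝ≥0∞)
    (hT : ∀ f : Hsp n, (∑' k, (‖T k f‖₊ : ℝ≥0∞) ^ (2 : ℝ)) ^ ((1 : ℝ) / 2) ≤ M2 * (‖f‖₊ : ℝ≥0∞))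
    (u : ℝ → Hsp n) :
    (∑' k, DP.UpNorm p (fun s => T k (u s)) ^ (2 : ℝ)) ^ ((1 : ℝ) / 2) ≤ M2 * DP.UpNorm p u := by
  classical
  have hzero : (∑' _ : ℕ, (0:ℝ≥0∞) ^ (2:ℝ)) ^ ((1:ℝ)/2) = 0 := by
    simp only [ENNReal.zero_rpow_of_pos (by norm_num : (0:ℝ) < 2), tsum_zero]
    exact ENNReal.zero_rpow_of_pos (by norm_num)
  by_cases hM0 : M2 = 0
  · have hT0 : ∀ k (g : Hsp n), T k g = 0 := by
      intro k g
      have h := hT g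
      rw [hM0, zero_mul, le_zero_iff, ENNReal.rpow_eq_zero_iff] at h
      have hts : (∑' k', (‖T k' g‖₊ : ℝ≥0∞) ^ (2:ℝ)) = 0 := by
        rcases h with ⟨h, _⟩ | ⟨_, h⟩
        · exact h
        · linarith
      have hk := ENNReal.tsum_eq_zero.mp hts k
      rw [ENNReal.rpow_eq_zero_iff] at hk
      rcases hk with ⟨h', _⟩ | ⟨h', _⟩
      · exact nnnorm_eq_zero.mp (ENNReal.coe_eq_zero.mp h')
      · exact absurd h' ENNReal.coe_ne_top
    have hz : ∀ k, DP.UpNorm p (fun s => T k (u s)) = 0 := by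
      intro k
      simp only [hT0]
      exact DP.upNorm_zero hp1
    simp only [hz]
    rw [hzero]
    exact zero_le
  · by_cases huT : DP.UpNorm p u = ⊤
    · rw [huT, ENNReal.mul_top hM0]
      exact le_top
    · have hne : (DP.Reps p u).Nonempty := by
        rw [Set.nonempty_iff_ne_empty]
        intro h
        exact huT (by rw [DP.upNorm_eq_sInf, h, sInf_empty])
      rw [DP.upNorm_eq_sInf]
      by_cases hMT : M2 = ⊤
      · by_cases hu0 : sInf (DP.Reps p u) = 0
        · have hk : ∀ k, DP.UpNorm p (fun s => T k (u s)) = 0 := by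
            intro k
            refine le_antisymm ?_ zero_le
            have hb := DP.le_mul_sInf (x := DP.UpNorm p (fun s => T k (u s)))
              (C := ENNReal.ofReal ‖T k‖) ENNReal.ofReal_ne_top hne ?_
            · rwa [hu0, mul_zero] at hb
            · rintro r ⟨c, a, h1, h2, h3, rfl⟩
              exact DP.single_rep hp1 (T k) c a h1 h2 h3
          rw [hu0, mul_zero]
          simp only [hk]
          rw [hzero]
        · rw [hMT, ENNReal.top_mul hu0]
          exact le_top
      · refine DP.le_mul_sInf hMT hne ?_
        rintro r ⟨c, a, h1, h2, h3, rfl⟩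
        exact DP.main_rep hp1 hp2 T M2 hT c a h1 h2 h3
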